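/- arXiv:1508.01212 — 3 statements merged into one kernel-verified Lean document; each statement's English description precedes it below -/
import Mathlib

section
/- Let X be a vector space, Y a subspace, and F : X → X a finite rank linear operator of rank n with F(Y) ⊆ Y. Then F can be written as a sum of n rank-one linear operators each of which maps Y into Y. -/
open Filter Topology

noncomputable section

def FinRank {E F : Type*} [NormedAddCommGroup E] [NormedSpace ℝ E]
    [NormedAddCommGroup F] [NormedSpace ℝ F] (T : E →L[ℝ] F) : Prop :=
  FiniteDimensional ℝ (LinearMap.range (T : E →ₗ[ℝ] F))

def TauLim {E : Type*} [NormedAddCommGroup E] [NormedSpace ℝ E]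
    (S : Set (E →L[ℝ] E)) (T : E →L[ℝ] E) : Prop :=
  ∃ (ι : Type) (l : Filter ι) (F : ι → E →L[ℝ] E), l.NeBot ∧
    (∀ i, F i ∈ S) ∧
    ∀ K : Set E, IsCompact K → ∀ ε : ℝ, 0 < ε →
      ∀ᶠ i in l, ∀ x ∈ K, ‖F i x - T x‖ ≤ ε

def HasAP (E : Type*) [NormedAddCommGroup E] [NormedSpace ℝ E] : Prop :=
  TauLim {F | FinRank F} (ContinuousLinearMap.id ℝ E)

def PairAP {E : Type*} [NormedAddCommGroup E] [NormedSpace ℝ E] (Y : Submodule ℝ E) : Prop :=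
  TauLim {F | FinRank F ∧ ∀ y ∈ Y, F y ∈ Y} (ContinuousLinearMap.id ℝ E)

def NuclearRep {E : Type*} [NormedAddCommGroup E] [NormedSpace ℝ E]
    (T : E →L[ℝ] E) (f : ℕ → StrongDual ℝ E) (x : ℕ → E) : Prop :=
  Summable (fun n => ‖f n‖ * ‖x n‖) ∧ ∀ z, T z = ∑' n, f n z • x n

def IsLinfty (E : Type*) [NormedAddCommGroup E] [NormedSpace ℝ E] : Prop :=
  ∃ C : ℝ, 1 ≤ C ∧ ∀ G : Submodule ℝ E, FiniteDimensional ℝ G →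
    ∃ F : Submodule ℝ E, G ≤ F ∧ FiniteDimensional ℝ F ∧
      ∃ (n : ℕ) (e : F ≃L[ℝ] (Fin n → ℝ)),
        ‖(e : F →L[ℝ] (Fin n → ℝ))‖ * ‖(e.symm : (Fin n → ℝ) →L[ℝ] F)‖ ≤ C

def LocallySplits {E : Type*} [NormedAddCommGroup E] [NormedSpace ℝ E]
    (Y : Submodule ℝ E) : Prop :=
  ∃ P : StrongDual ℝ E →L[ℝ] StrongDual ℝ E,
    (∀ f, P (P f) = P f) ∧
    (∀ f : StrongDual ℝ E, ∀ y ∈ Y, (P f) y = 0) ∧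
    (∀ f : StrongDual ℝ E, (∀ y ∈ Y, f y = 0) → P f = f)


theorem stmt1 {K X : Type*} [Field K] [AddCommGroup X] [Module K X]
    (Y : Submodule K X) (F : X →ₗ[K] X) (n : ℕ)
    (hfin : FiniteDimensional K (LinearMap.range F))
    (hrank : Module.finrank K (LinearMap.range F) = n)
    (hFY : ∀ y ∈ Y, F y ∈ Y) :
    ∃ (f : Fin n → (X →ₗ[K] K)) (x : Fin n → X),
      (∀ k, (∀ y ∈ Y, f k y = 0) ∨ x k ∈ Y) ∧
      ∀ z, F z = ∑ k, f k z • x k := by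
  classical
  set R := LinearMap.range F with hR
  haveI : FiniteDimensional K R := hfin
  set S : Submodule K R := Y.comap R.subtype with hS
  obtain ⟨S', hc⟩ := Submodule.exists_isCompl S
  haveI : FiniteDimensional K S := inferInstance
  haveI : FiniteDimensional K S' := inferInstance
  set m := Module.finrank K S with hm
  set m' := Module.finrank K S' with hm'
  let bS : Module.Basis (Fin m) K S := Module.finBasis K S
  let bS' : Module.Basis (Fin m') K S' := Module.finBasis K S'
  let eq : (S × S') ≃ₗ[K] R := Submodule.prodEquivOfIsCompl S S' hc
  let b : Module.Basis (Fin m ⊕ Fin m') K R := (bS.prod bS').map eq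
  have hcard : m + m' = n := by
    rw [hm, hm', Submodule.finrank_add_eq_of_isCompl hc, hrank]
  have hcard' : Fintype.card (Fin m ⊕ Fin m') = n := by
    simp [hcard]
  let e : (Fin m ⊕ Fin m') ≃ Fin n := Fintype.equivFinOfCardEq hcard'
  let Fc : X →ₗ[K] R := F.rangeRestrict
  refine ⟨fun k => (b.coord (e.symm k)).comp Fc, fun k => ((b (e.symm k) : R) : X), ?_, ?_⟩
  · intro k
    cases h : e.symm k with
    | inl j =>
      right
      show ((b (e.symm k) : R) : X) ∈ Y
      rw [h]
      have : b (Sum.inl j) = (↑(bS j) : R) := by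
        simp only [b, Module.Basis.map_apply, Module.Basis.prod_apply]
        simp [eq, Submodule.coe_prodEquivOfIsCompl']
      rw [this]
      exact (bS j).2
    | inr j =>
      left
      intro y hy
      show b.coord (e.symm k) (Fc y) = 0
      rw [h]
      have hmem : Fc y ∈ S := by
        simp only [hS, Submodule.mem_comap, Submodule.coe_subtype]
        exact hFY y hy
      -- show the inr-coordinate of an element of S is zero
      show b.repr (Fc y) (Sum.inr j) = 0
      have key : ∀ r : R, r ∈ S → b.repr r (Sum.inr j) = 0 := by
        intro r hr
        have hrw : r = eq (⟨r, hr⟩, 0) := by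
          apply Subtype.ext
          simp [eq, Submodule.coe_prodEquivOfIsCompl']
        rw [hrw]
        simp only [b, Module.Basis.map_repr, LinearEquiv.trans_apply, LinearEquiv.symm_apply_apply]
        simp [Module.Basis.prod_repr_inr]
      exact key _ hmem
  · intro z
    have hz : F z = ((Fc z : R) : X) := rfl
    rw [hz]
    conv_lhs => rw [← b.sum_repr (Fc z)]
    rw [Submodule.coe_sum]
    simp only [LinearMap.coe_comp, Function.comp_apply, Module.Basis.coord_apply]
    have hcoe : ∀ i, ((b.repr (Fc z) i • b i : R) : X) = b.repr (Fc z) i • ((b i : R) : X) :=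
      fun i => rfl
    simp only [hcoe]
    exact (Equiv.sum_comp e.symm (fun i => b.repr (Fc z) i • ((b i : R) : X))).symm
end
end

section
/- If (X,Y) has the approximation property (the identity on X is a τ-limit of finite rank operators leaving Y invariant), then the quotient X/Y has the approximation property. -/
open Filter Topology

noncomputable section

variable {X : Type*} [NormedAddCommGroup X] [NormedSpace ℝ X]

namespace APAux

variable (Y : Submodule ℝ X)

/-- The quotient map as a continuous linear map. -/
def QL : X →L[ℝ] X ⧸ Y :=
  Y.mkQ.mkContinuous 1 (fun x => by
    simpa using Submodule.Quotient.norm_mk_le Y x)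

@[simp] lemma QL_apply (x : X) : QL Y x = Submodule.Quotient.mk x := rfl

lemma norm_QL_apply_le (x : X) : ‖QL Y x‖ ≤ ‖x‖ :=
  Submodule.Quotient.norm_mk_le Y x

variable {Y}


lemma barKer (F : X →L[ℝ] X) (hF : ∀ y ∈ Y, F y ∈ Y) :
    Y ≤ LinearMap.ker ((Y.mkQ).comp (F : X →ₗ[ℝ] X)) := by
  intro y hy
  simp only [LinearMap.mem_ker, LinearMap.comp_apply, LinearMap.coe_coe,
    Submodule.mkQ_apply, Submodule.Quotient.mk_eq_zero]
  exact hF y hy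

/-- The induced map on the quotient. -/
def bar (F : X →L[ℝ] X) (hF : ∀ y ∈ Y, F y ∈ Y) : (X ⧸ Y) →L[ℝ] (X ⧸ Y) :=
  LinearMap.mkContinuous
    (Y.liftQ ((Y.mkQ).comp (F : X →ₗ[ℝ] X)) (barKer F hF))
    (‖F‖ + 1)
    (by
      intro q
      refine le_of_forall_pos_le_add (fun ε hε => ?_)
      have hδ : (0:ℝ) < ε / (‖F‖ + 1) := by positivity
      obtain ⟨m, hm, hmn⟩ := Submodule.Quotient.norm_mk_lt q hδ
      have h1 : Y.liftQ ((Y.mkQ).comp (F : X →ₗ[ℝ] X)) (barKer F hF) q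
          = Submodule.Quotient.mk (F m) := by
        rw [← hm]; rfl
      rw [h1]
      calc ‖(Submodule.Quotient.mk (F m) : X ⧸ Y)‖ ≤ ‖F m‖ :=
            Submodule.Quotient.norm_mk_le Y _
        _ ≤ ‖F‖ * ‖m‖ := F.le_opNorm m
        _ ≤ (‖F‖ + 1) * ‖m‖ := by nlinarith [norm_nonneg m, norm_nonneg F]
        _ ≤ (‖F‖ + 1) * (‖q‖ + ε / (‖F‖ + 1)) := by
            have h2 : (0:ℝ) < ‖F‖ + 1 := by positivity
            nlinarith [hmn.le]
        _ = (‖F‖ + 1) * ‖q‖ + ε := by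
            field_simp)

@[simp] lemma bar_mk (F : X →L[ℝ] X) (hF : ∀ y ∈ Y, F y ∈ Y) (x : X) :
    bar F hF (Submodule.Quotient.mk x) = Submodule.Quotient.mk (F x) := rfl

lemma finRank_bar (F : X →L[ℝ] X) (hF : ∀ y ∈ Y, F y ∈ Y)
    (hfin : FiniteDimensional ℝ (LinearMap.range (F : X →ₗ[ℝ] X))) :
    FiniteDimensional ℝ (LinearMap.range ((bar F hF : (X ⧸ Y) →L[ℝ] (X ⧸ Y)) :
      (X ⧸ Y) →ₗ[ℝ] (X ⧸ Y))) := by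
  have h1 : ((bar F hF : (X ⧸ Y) →L[ℝ] (X ⧸ Y)) : (X ⧸ Y) →ₗ[ℝ] (X ⧸ Y))
      = Y.liftQ ((Y.mkQ).comp (F : X →ₗ[ℝ] X)) (barKer F hF) := rfl
  rw [h1, Submodule.range_liftQ, LinearMap.range_comp]
  exact Module.Finite.map _ _

end APAux

namespace APAux

open scoped Classical in
lemma step {Y : Submodule ℝ X} {K : Set (X ⧸ Y)} (hK : IsCompact K) {δ : ℝ} (hδ : 0 < δ) :
    ∃ (A : Finset X) (T : Set (X ⧸ Y)), IsCompact T ∧ T ⊆ Metric.closedBall 0 δ ∧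
      (∀ x ∈ A, (Submodule.Quotient.mk x : X ⧸ Y) ∈ K ∧
        ‖x‖ ≤ ‖(Submodule.Quotient.mk x : X ⧸ Y)‖ + δ) ∧
      (∀ t ∈ K, ∃ x ∈ A, t - Submodule.Quotient.mk x ∈ T) := by
  obtain ⟨s, hsK, hscov⟩ := hK.elim_nhds_subcover (fun a => Metric.ball a δ)
    (fun a _ => Metric.ball_mem_nhds a hδ)
  have hlift : ∀ a : X ⧸ Y, ∃ x : X, (Submodule.Quotient.mk x : X ⧸ Y) = a ∧ ‖x‖ < ‖a‖ + δ :=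
    fun a => Submodule.Quotient.norm_mk_lt a hδ
  choose L hL1 hL2 using hlift
  refine ⟨s.image L,
    ((fun p : (X ⧸ Y) × (X ⧸ Y) => p.1 - p.2) '' (K ×ˢ (s : Set (X ⧸ Y)))) ∩
      Metric.closedBall 0 δ, ?_, Set.inter_subset_right, ?_, ?_⟩
  · exact ((hK.prod s.finite_toSet.isCompact).image
      (continuous_fst.sub continuous_snd)).inter_right Metric.isClosed_closedBall
  · intro x hx
    obtain ⟨a, ha, rfl⟩ := Finset.mem_image.1 hx
    rw [hL1 a]
    exact ⟨hsK a ha, (hL2 a).le⟩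
  · intro t ht
    have := hscov ht
    simp only [Set.mem_iUnion, Metric.mem_ball] at this
    obtain ⟨a, ha, hda⟩ := this
    refine ⟨L a, Finset.mem_image_of_mem L ha, ⟨⟨(t, a), ⟨ht, ha⟩, by rw [hL1]⟩, ?_⟩⟩
    rw [hL1, Metric.mem_closedBall, dist_zero_right, ← dist_eq_norm]
    exact hda.le

end APAux

namespace APAux

lemma exists_compact_lift [CompleteSpace X] {Y : Submodule ℝ X} [IsClosed (Y : Set X)]
    {K : Set (X ⧸ Y)}
    (hK : IsCompact K) :
    ∃ C : Set X, IsCompact C ∧ K ⊆ Submodule.Quotient.mk '' C := by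
  -- bound on K
  obtain ⟨R, hRK⟩ := hK.isBounded.subset_closedBall 0
  -- choice functions from the step lemma
  have hstep := fun (T : Set (X ⧸ Y)) (hT : IsCompact T) (δ : ℝ) (hδ : 0 < δ) => step hT hδ
  choose A Tn hcomp hball hliftp hcover using hstep
  set δ : ℕ → ℝ := fun n => (2:ℝ)⁻¹ ^ n * 2⁻¹ with hδdef
  have hδpos : ∀ n, 0 < δ n := fun n => by positivity
  -- the recursive sequence of compact sets
  set TT : ℕ → {T : Set (X ⧸ Y) // IsCompact T} := fun n =>
    Nat.rec ⟨K, hK⟩ (fun n p => ⟨Tn p.1 p.2 (δ n) (hδpos n), hcomp p.1 p.2 (δ n) (hδpos n)⟩) n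
    with hTTdef
  have hTTsucc : ∀ n, (TT (n+1)).1 = Tn (TT n).1 (TT n).2 (δ n) (hδpos n) := fun n => rfl
  set AA : ℕ → Finset X := fun n => A (TT n).1 (TT n).2 (δ n) (hδpos n) with hAAdef
  -- norm bounds
  set Rb : ℕ → ℝ := fun n => Nat.rec R (fun n _ => δ n) n with hRbdef
  have hTTball : ∀ n, (TT n).1 ⊆ Metric.closedBall 0 (Rb n) := by
    intro n
    cases n with
    | zero => exact hRK
    | succ n => exact (hTTsucc n) ▸ hball (TT n).1 (TT n).2 (δ n) (hδpos n)
  set u : ℕ → ℝ := fun n => Rb n + δ n with hudef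
  have hAAbound : ∀ n, ∀ x ∈ AA n, ‖x‖ ≤ u n := by
    intro n x hx
    obtain ⟨hmem, hnle⟩ := hliftp (TT n).1 (TT n).2 (δ n) (hδpos n) x hx
    have h2 := hTTball n hmem
    rw [Metric.mem_closedBall, dist_zero_right] at h2
    show ‖x‖ ≤ Rb n + δ n
    exact hnle.trans (by linarith)
  -- summability of the bounds
  have hgeo : Summable (fun n : ℕ => (2:ℝ)⁻¹ ^ n) :=
    summable_geometric_of_lt_one (by norm_num) (by norm_num)
  have hδsum : Summable δ := by
    simpa [hδdef] using hgeo.mul_right (2:ℝ)⁻¹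
  have hRbsum : Summable Rb := by
    rw [← summable_nat_add_iff 1]
    exact hδsum
  have husum : Summable u := hRbsum.add hδsum
  -- limits
  have hRb0 : Filter.Tendsto Rb atTop (𝓝 0) := by
    rw [← tendsto_add_atTop_iff_nat 1]
    have h3 : Filter.Tendsto (fun n : ℕ => (2:ℝ)⁻¹ ^ n * 2⁻¹) atTop (𝓝 (0 * 2⁻¹)) :=
      (tendsto_pow_atTop_nhds_zero_of_lt_one (by norm_num) (by norm_num)).mul_const _
    rw [zero_mul] at h3
    exact h3
  -- the compact set downstairs
  set Z := ∀ n : ℕ, {x // x ∈ AA n} with hZdef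
  set g : Z → X := fun z => ∑' n, (z n : X) with hgdef
  have hgc : Continuous g := by
    refine continuous_tsum (fun n => continuous_subtype_val.comp (continuous_apply n)) husum ?_
    intro n z
    exact hAAbound n (z n : X) (z n).2
  refine ⟨Set.range g, isCompact_range hgc, ?_⟩
  rintro q hq
  -- build the sequence of remainders and lifts
  have hcov : ∀ n, ∀ t ∈ (TT n).1, ∃ x ∈ AA n,
      t - Submodule.Quotient.mk x ∈ (TT (n+1)).1 := by
    intro n t ht
    obtain ⟨x, hx1, hx2⟩ := hcover (TT n).1 (TT n).2 (δ n) (hδpos n) t ht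
    exact ⟨x, hx1, (hTTsucc n) ▸ hx2⟩
  choose xf hxf1 hxf2 using hcov
  set seq : ∀ n : ℕ, {t : X ⧸ Y // t ∈ (TT n).1} := fun n =>
    Nat.rec ⟨q, hq⟩ (fun n p => ⟨p.1 - Submodule.Quotient.mk (xf n p.1 p.2),
      hxf2 n p.1 p.2⟩) n with hseqdef
  set z : Z := fun n => ⟨xf n (seq n).1 (seq n).2, hxf1 n (seq n).1 (seq n).2⟩ with hzdef
  have hseqsucc : ∀ n, (seq (n+1)).1 = (seq n).1 - Submodule.Quotient.mk (z n : X) :=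
    fun n => rfl
  -- partial sums
  have hpartial : ∀ n, ∑ i ∈ Finset.range n, QL Y (z i : X) = q - (seq n).1 := by
    intro n
    induction n with
    | zero => simp [hseqdef]
    | succ n ih =>
        rw [Finset.sum_range_succ, ih, hseqsucc n]
        simp only [QL_apply]
        abel
  -- summability of the lifts
  have hzsum : Summable (fun n => (z n : X)) :=
    Summable.of_norm_bounded husum (fun n => hAAbound n _ (z n).2)
  have hQzsum : Summable (fun n => QL Y (z n : X)) :=
    Summable.of_norm_bounded husum
      (fun n => (norm_QL_apply_le Y _).trans (hAAbound n _ (z n).2))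
  -- seq tends to 0
  have hseq0 : Filter.Tendsto (fun n => (seq n).1) atTop (𝓝 0) := by
    apply squeeze_zero_norm (fun n => ?_) hRb0
    have := hTTball n (seq n).2
    rwa [Metric.mem_closedBall, dist_zero_right] at this
  -- the partial sums converge to q
  have hHasSum : HasSum (fun n => QL Y (z n : X)) q := by
    rw [hQzsum.hasSum_iff_tendsto_nat]
    have : Filter.Tendsto (fun n => q - (seq n).1) atTop (𝓝 (q - 0)) :=
      tendsto_const_nhds.sub hseq0
    simp only [sub_zero] at this
    convert this using 2
    exact hpartial _
  refine ⟨g z, Set.mem_range_self z, ?_⟩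
  have : (Submodule.Quotient.mk (g z) : X ⧸ Y) = QL Y (g z) := rfl
  rw [this, hgdef]
  rw [ContinuousLinearMap.map_tsum _ hzsum]
  exact hHasSum.tsum_eq

end APAux


variable [CompleteSpace X]

theorem stmt9 (Y : Submodule ℝ X) [hY : IsClosed (Y : Set X)]
    (hpair : PairAP Y) :
    HasAP (X ⧸ Y) := by
  obtain ⟨ι, l, F, hne, hmem, hconv⟩ := hpair
  refine ⟨ι, l, fun i => APAux.bar (F i) (hmem i).2, hne,
    fun i => APAux.finRank_bar (F i) (hmem i).2 (hmem i).1, ?_⟩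
  intro K hK ε hε
  obtain ⟨C, hC, hKC⟩ := APAux.exists_compact_lift hK
  filter_upwards [hconv C hC ε hε] with i hi
  intro q hq
  obtain ⟨x, hxC, rfl⟩ := hKC hq
  have h1 : APAux.bar (F i) (hmem i).2 (Submodule.Quotient.mk x)
      - ContinuousLinearMap.id ℝ (X ⧸ Y) (Submodule.Quotient.mk x)
      = (Submodule.Quotient.mk (F i x - ContinuousLinearMap.id ℝ X x) : X ⧸ Y) := by
    rw [APAux.bar_mk]
    simp [Submodule.Quotient.mk_sub]
  rw [h1]
  exact (Submodule.Quotient.norm_mk_le Y _).trans (hi x hxC)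
end
end

section
/- Let X be a reflexive Banach space and Y ⊆ X a closed subspace such that every nuclear operator T on X with T(X) ⊆ Y and T(Y) = 0 has trace zero over every representation (i.e., whenever T = Σ x_n* ⊗ x_n with Σ‖x_n*‖‖x_n‖ < ∞ and the associated operator satisfies TX ⊆ Y, TY = 0, then Σ x_n*(x_n) = 0). If moreover X has the AP, then the identity on X cannot be separated from the set F_Y(X) of finite rank operators leaving Y invariant by any τ-continuous linear functional on L(X). -/
open Filter Topology

noncomputable section

variable {X : Type*} [NormedAddCommGroup X] [NormedSpace ℝ X] [CompleteSpace X]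

theorem stmt19 (Y : Submodule ℝ X) (hY : IsClosed (Y : Set X))
    (hrefl : Function.Surjective (NormedSpace.inclusionInDoubleDual ℝ X))
    (hXAP : HasAP X)
    (htr : ∀ (T : X →L[ℝ] X) (f : ℕ → StrongDual ℝ X) (x : ℕ → X),
      NuclearRep T f x → (∀ z, T z ∈ Y) → (∀ y ∈ Y, T y = 0) →
      ∑' n, f n (x n) = 0) :
    ∀ (f : ℕ → StrongDual ℝ X) (x : ℕ → X),
      Summable (fun n => ‖f n‖ * ‖x n‖) →
      (∀ F : X →L[ℝ] X, FinRank F → (∀ y ∈ Y, F y ∈ Y) →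
        ∑' n, f n (F (x n)) = 0) →
      ∑' n, f n (x n) = 0 := by
  intro f x hsum hvan
  classical
  set A : ℕ → X →L[ℝ] X := fun n => (f n).smulRight (x n) with hA
  have hAsum : Summable A := by
    apply Summable.of_norm
    simpa [hA, ContinuousLinearMap.norm_smulRight_apply] using hsum
  set T : X →L[ℝ] X := ∑' n, A n with hT
  have hzsum : ∀ z : X, Summable fun n => f n z • x n := by
    intro z
    apply Summable.of_norm
    apply Summable.of_nonneg_of_le (fun n => norm_nonneg _) _ (hsum.mul_left ‖z‖)
    intro n
    rw [norm_smul]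
    calc ‖f n z‖ * ‖x n‖ ≤ (‖f n‖ * ‖z‖) * ‖x n‖ := by
          exact mul_le_mul_of_nonneg_right ((f n).le_opNorm z) (norm_nonneg _)
      _ = ‖z‖ * (‖f n‖ * ‖x n‖) := by ring
  have hTz : ∀ z, T z = ∑' n, f n z • x n := by
    intro z
    have := (ContinuousLinearMap.apply ℝ X z).map_tsum hAsum
    simpa [hT, hA] using this
  have key : ∀ (f0 : StrongDual ℝ X) (x0 : X),
      (∀ y ∈ Y, f0 y • x0 ∈ Y) → f0 (T x0) = 0 := by
    intro f0 x0 hF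
    have hfr : FinRank (f0.smulRight x0) := by
      unfold FinRank
      have hle : LinearMap.range ((f0.smulRight x0 : X →L[ℝ] X) : X →ₗ[ℝ] X) ≤
          Submodule.span ℝ {x0} := by
        rintro _ ⟨z, rfl⟩
        exact Submodule.smul_mem _ _ (Submodule.mem_span_singleton_self x0)
      exact Submodule.finiteDimensional_of_le hle
    have h0 := hvan _ hfr (by intro y hy; simpa using hF y hy)
    have heq : f0 (T x0) = ∑' n, f n ((f0.smulRight x0) (x n)) := by
      rw [hTz, f0.map_tsum (hzsum x0)]
      congr 1
      funext n
      simp [mul_comm]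
    rw [heq, h0]
  have hTY : ∀ y ∈ Y, T y = 0 := by
    intro y hy
    apply NormedSpace.eq_zero_of_forall_dual_eq_zero ℝ
    intro f0
    exact key f0 y (fun y' hy' => Y.smul_mem _ hy)
  have hTX : ∀ z, T z ∈ Y := by
    intro z
    by_contra h
    obtain ⟨g, u, hgu, hu⟩ := geometric_hahn_banach_closed_point Y.convex hY h
    have hg0 : ∀ y ∈ Y, g y = 0 := by
      intro y hy
      by_contra hne
      have h1 := hgu _ (Y.smul_mem ((u + 1) / g y) hy)
      rw [map_smul, smul_eq_mul, div_mul_cancel₀ _ hne] at h1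
      linarith
    have hgz : g (T z) = 0 := by
      apply key g z
      intro y hy
      rw [hg0 y hy, zero_smul]
      exact Y.zero_mem
    have h2 := hgu 0 Y.zero_mem
    rw [map_zero] at h2
    rw [hgz] at hu
    linarith
  exact htr T f x ⟨hsum, hTz⟩ hTX hTY
end
end
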